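/- For positive integers n, m, j with 0 ≤ j ≤ n and integer k ≥ 0, the number of lattice points (x_1,...,x_n) ∈ Z^n with x_i ≥ 0 for i > j and |x_1| + ... + |x_n| = k equals Σ_{i=0}^{j} 2^{j-i} (-1)^i C(j,i) C(n-i-1+k, n-i-1), where terms with n-i ≤ 0 are interpreted as 0 unless k=0. -/

import Mathlib

open Finset

lemma card_finAntidiagonal_rec (d k : ℕ) :
    (finAntidiagonal (d + 1) k : Finset (Fin (d+1) → ℕ)).card
      = ∑ a ∈ range (k + 1), (finAntidiagonal d (k - a) : Finset (Fin d → ℕ)).card := by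
  rw [Finset.card_eq_sum_card_fiberwise (f := fun f => f 0) (t := range (k+1))
    (fun f hf => by
      rw [mem_coe, mem_finAntidiagonal] at hf
      rw [mem_coe, mem_range]
      exact Nat.lt_succ_of_le (hf ▸ Finset.single_le_sum (fun i _ => Nat.zero_le _) (mem_univ 0)))]
  refine Finset.sum_congr rfl fun a ha => ?_
  rw [mem_range, Nat.lt_succ_iff] at ha
  apply Finset.card_bij (fun f _ => Fin.tail f)
  · intro f hf
    rw [mem_filter, mem_finAntidiagonal] at hf
    rw [mem_finAntidiagonal]
    have h1 := Fin.sum_univ_succ f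
    have h2 : ∑ i, Fin.tail f i = ∑ i : Fin d, f i.succ := rfl
    omega
  · intro f hf g hg h
    rw [mem_filter] at hf hg
    rw [← Fin.cons_self_tail f, ← Fin.cons_self_tail g, hf.2, hg.2, h]
  · intro b hb
    rw [mem_finAntidiagonal] at hb
    refine ⟨Fin.cons a b, ?_, rfl⟩
    rw [mem_filter, mem_finAntidiagonal, Fin.sum_univ_succ]
    simp only [Fin.cons_zero, Fin.cons_succ]
    exact ⟨by omega, trivial⟩

lemma card_finAntidiagonal_succ (d k : ℕ) :
    (finAntidiagonal (d + 1) k : Finset (Fin (d+1) → ℕ)).card = (d + k).choose k := by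
  induction d generalizing k with
  | zero =>
    have : (finAntidiagonal 1 k : Finset (Fin 1 → ℕ)) = {fun _ => k} := by
      ext f
      rw [mem_finAntidiagonal, Fin.sum_univ_one, mem_singleton]
      constructor
      · intro h; funext i; rw [Fin.eq_zero i]; exact h
      · intro h; rw [h]
    rw [this, card_singleton, Nat.zero_add, Nat.choose_self]
  | succ d ih =>
    rw [card_finAntidiagonal_rec]
    have : ∀ a ∈ range (k+1), (finAntidiagonal (d+1) (k - a)).card = (d + (k - a)).choose (k - a) :=
      fun a _ => ih _
    rw [Finset.sum_congr rfl this]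
    have hrefl : ∑ a ∈ range (k+1), (d + (k - a)).choose (k - a)
        = ∑ b ∈ range (k+1), (d + b).choose b := by
      rw [← Finset.sum_range_reflect (fun b => (d + b).choose b) (k+1)]
      refine Finset.sum_congr rfl fun a ha => ?_
      rw [mem_range, Nat.lt_succ_iff] at ha
      congr 1 <;> omega
    rw [hrefl]
    have h1 : ∑ b ∈ range (k+1), (d + b).choose b = ∑ b ∈ range (k+1), (d + b).choose d :=
      Finset.sum_congr rfl fun b _ => Nat.choose_symm_add.symm
    have h2 : ∑ m ∈ Icc d (d + k), m.choose d = ∑ b ∈ range (k + 1), (d + b).choose d := by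
      rw [← Finset.Ico_add_one_right_eq_Icc, Finset.sum_Ico_eq_sum_range]
      have : d + k + 1 - d = k + 1 := by omega
      rw [this]
    rw [h1, ← h2, Nat.sum_Icc_choose]
    rw [show d + k + 1 = d + 1 + k from by omega]
    exact (Nat.choose_symm_add).symm ▸ rfl

lemma card_finAntidiagonal_zero (k : ℕ) :
    (finAntidiagonal 0 k : Finset (Fin 0 → ℕ)).card = if k = 0 then 1 else 0 := by
  split_ifs with hk
  · subst hk
    have : (finAntidiagonal 0 0 : Finset (Fin 0 → ℕ)) = {fun i => i.elim0} := by
      ext f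
      rw [mem_finAntidiagonal, mem_singleton]
      simp only [Finset.univ_eq_empty, Finset.sum_empty, true_iff]
      funext i
      exact i.elim0
    rw [this, card_singleton]
  · rw [Finset.card_eq_zero, Finset.eq_empty_iff_forall_notMem]
    intro f hf
    rw [mem_finAntidiagonal] at hf
    simp only [Finset.univ_eq_empty, Finset.sum_empty] at hf
    exact hk hf.symm

lemma card_piAntidiag' {ι : Type*} [DecidableEq ι] (s : Finset ι) (n : ℕ) :
    (piAntidiag s n).card = (finAntidiagonal s.card n).card := by
  rw [piAntidiag]
  induction' Fintype.truncEquivFinOfCardEq (Fintype.card_coe s) using Trunc.ind with e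
  simp only [Trunc.lift_mk, Finset.card_map]


/-- Weight numbers for the reflection variant `G^j_{n,m}`: the number of points
of `ℤ^n` with the last `n-j` coordinates nonnegative and absolute coordinate sum
`k` is given by the alternating binomial sum. -/
theorem stmt9 (n m j k : ℕ) (hn : 0 < n) (hm : 0 < m) (hj : j ≤ n) :
    (Set.ncard {x : Fin n → ℤ |
        (∀ i : Fin n, j ≤ (i : ℕ) → 0 ≤ x i) ∧ ∑ i, |x i| = (k : ℤ)} : ℤ) =
      ∑ i ∈ Finset.range (j + 1),
        2 ^ (j - i) * (-1 : ℤ) ^ i * (j.choose i : ℤ) *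
          (if i < n then ((n - i - 1 + k).choose (n - i - 1) : ℤ)
           else if k = 0 then 1 else 0) := by
  classical
  set A : Finset (Fin n → ℕ) := finAntidiagonal n k with hA
  set Fj : Finset (Fin n) := univ.filter (fun i : Fin n => (i : ℕ) < j) with hFj
  set z : (Fin n → ℕ) → ℕ :=
    fun y => (univ.filter (fun i : Fin n => (i:ℕ) < j ∧ y i ≠ 0)).card with hz
  set Zf : (Fin n → ℕ) → Finset (Fin n) :=
    fun y => univ.filter (fun i : Fin n => (i:ℕ) < j ∧ y i = 0) with hZf
  have hFjcard : Fj.card = j := by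
    have : Fj = Finset.map (Fin.castLEEmb hj) univ := by
      ext i
      simp only [hFj, mem_filter, mem_univ, true_and, mem_map]
      constructor
      · intro hi
        exact ⟨⟨(i:ℕ), hi⟩, rfl⟩
      · rintro ⟨a, rfl⟩
        exact a.2
    rw [this, card_map, card_univ, Fintype.card_fin]
  have hzZ : ∀ y : Fin n → ℕ, z y + (Zf y).card = j := by
    intro y
    have e1 : univ.filter (fun i : Fin n => (i:ℕ) < j ∧ y i ≠ 0)
        = Fj.filter (fun i => y i ≠ 0) := by rw [hFj, filter_filter]
    have e2 : Zf y = Fj.filter (fun i => ¬ y i ≠ 0) := by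
      rw [hZf, hFj, filter_filter]
      ext i
      simp only [mem_filter, not_not]
    rw [hz]
    simp only
    rw [e1, e2, Finset.card_filter_add_card_filter_not, hFjcard]
  set F : Finset (Fin n → ℤ) :=
    (Fintype.piFinset fun _ : Fin n => Finset.Icc (-(k:ℤ)) (k:ℤ)).filter
      (fun x => (∀ i : Fin n, j ≤ (i:ℕ) → 0 ≤ x i) ∧ ∑ i, |x i| = (k:ℤ)) with hF
  have hSF : {x : Fin n → ℤ |
      (∀ i : Fin n, j ≤ (i : ℕ) → 0 ≤ x i) ∧ ∑ i, |x i| = (k : ℤ)} = ↑F := by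
    ext x
    simp only [hF, Set.mem_setOf_eq, coe_filter, Fintype.mem_piFinset, mem_Icc]
    refine ⟨fun hx => ⟨fun i => ?_, hx⟩, fun hx => hx.2⟩
    have h1 : |x i| ≤ (k:ℤ) :=
      hx.2 ▸ Finset.single_le_sum (fun i _ => abs_nonneg (x i)) (mem_univ i)
    constructor
    · linarith [neg_abs_le (x i)]
    · linarith [le_abs_self (x i)]
  rw [hSF, Set.ncard_coe_finset]
  have h1 : F.card = ∑ y ∈ A, 2 ^ z y := by
    rw [Finset.card_eq_sum_card_fiberwise (f := fun x (i : Fin n) => (x i).natAbs) (t := A)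
      (fun x hx => by
        rw [hF, mem_coe, mem_filter] at hx
        rw [hA, mem_coe, mem_finAntidiagonal]
        have hs := hx.2.2
        have hc : ((∑ i, (x i).natAbs : ℕ) : ℤ) = (k:ℤ) := by
          push_cast [Int.natCast_natAbs]
          exact hs
        exact_mod_cast hc)]
    refine Finset.sum_congr rfl fun y hy => ?_
    rw [hA, mem_finAntidiagonal] at hy
    have hyk : ∀ i, y i ≤ k := fun i =>
      hy ▸ Finset.single_le_sum (fun i _ => Nat.zero_le _) (mem_univ i)
    have hfib : F.filter (fun x => (fun i => (x i).natAbs) = y)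
        = Fintype.piFinset (fun i : Fin n => if (i:ℕ) < j ∧ y i ≠ 0
            then ({(y i : ℤ), -(y i : ℤ)} : Finset ℤ) else {(y i : ℤ)}) := by
      ext x
      rw [mem_filter, Fintype.mem_piFinset, hF, mem_filter, Fintype.mem_piFinset]
      constructor
      · rintro ⟨⟨hicc, hnn, hsum⟩, hxy⟩
        intro i
        have hi := congrFun hxy i
        by_cases hc : (i:ℕ) < j ∧ y i ≠ 0
        · rw [if_pos hc, mem_insert, mem_singleton]
          exact Int.natAbs_eq_iff.mp hi
        · rw [if_neg hc, mem_singleton]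
          push_neg at hc
          by_cases hij : (i:ℕ) < j
          · have h0 : y i = 0 := hc hij
            rw [h0] at hi ⊢
            exact_mod_cast Int.natAbs_eq_zero.mp hi
          · have h0 : 0 ≤ x i := hnn i (le_of_not_gt hij)
            rw [← hi, Int.natAbs_of_nonneg h0]
      · intro hx
        have habs : ∀ i, |x i| = (y i : ℤ) := by
          intro i
          have hxi := hx i
          by_cases hc : (i:ℕ) < j ∧ y i ≠ 0
          · rw [if_pos hc, mem_insert, mem_singleton] at hxi
            rcases hxi with h | h <;> rw [h]
            · exact abs_of_nonneg (Int.natCast_nonneg _)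
            · rw [abs_neg]; exact abs_of_nonneg (Int.natCast_nonneg _)
          · rw [if_neg hc, mem_singleton] at hxi
            rw [hxi]; exact abs_of_nonneg (Int.natCast_nonneg _)
        have hnn : ∀ i : Fin n, j ≤ (i:ℕ) → 0 ≤ x i := by
          intro i hij
          have hxi := hx i
          rw [if_neg (by push_neg; intro h; omega), mem_singleton] at hxi
          rw [hxi]; exact Int.natCast_nonneg _
        have hsum : ∑ i, |x i| = (k:ℤ) := by
          rw [Finset.sum_congr rfl fun i _ => habs i]
          exact_mod_cast congrArg (Nat.cast (R := ℤ)) hy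
        refine ⟨⟨fun i => ?_, hnn, hsum⟩, funext fun i => ?_⟩
        · rw [mem_Icc]
          have hle : |x i| ≤ (k:ℤ) := by
            rw [habs i]; exact_mod_cast hyk i
          constructor
          · linarith [neg_abs_le (x i)]
          · linarith [le_abs_self (x i)]
        · have := habs i
          rw [Int.abs_eq_natAbs] at this
          exact_mod_cast this
    rw [hfib, Fintype.card_piFinset]
    have hcards : ∀ i : Fin n,
        ((if (i:ℕ) < j ∧ y i ≠ 0 then ({(y i:ℤ), -(y i:ℤ)} : Finset ℤ)
          else {(y i:ℤ)}).card) = if (i:ℕ) < j ∧ y i ≠ 0 then 2 else 1 := by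
      intro i
      split_ifs with hc
      · rw [card_insert_of_notMem, card_singleton]
        rw [mem_singleton]
        intro h
        have h2 : y i ≠ 0 := hc.2
        omega
      · exact card_singleton _
    rw [Finset.prod_congr rfl fun i _ => hcards i, Finset.prod_ite, Finset.prod_const,
      Finset.prod_const, one_pow, mul_one, hz]
  rw [h1]
  push_cast
  have h2 : ∀ y ∈ A, (2:ℤ) ^ z y
      = ∑ T ∈ (Zf y).powerset, (-1:ℤ)^T.card * 2^(j - T.card) := by
    intro y hy
    have hzj := hzZ y
    have hsplit : ∀ T ∈ (Zf y).powerset, (-1:ℤ)^T.card * 2^(j - T.card)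
        = 2^(j - (Zf y).card) * ((-1:ℤ)^T.card * 2^((Zf y).card - T.card)) := by
      intro T hT
      have hTc : T.card ≤ (Zf y).card := card_le_card (mem_powerset.mp hT)
      rw [show j - T.card = (j - (Zf y).card) + ((Zf y).card - T.card) from by omega, pow_add]
      ring
    rw [Finset.sum_congr rfl hsplit, ← Finset.mul_sum, Finset.sum_pow_mul_eq_add_pow]
    norm_num
    rw [show j - (Zf y).card = z y from by omega]
  rw [Finset.sum_congr rfl h2]
  have hcomm : ∀ (y : Fin n → ℕ) (T : Finset (Fin n)),
      y ∈ A ∧ T ∈ (Zf y).powerset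
        ↔ y ∈ A.filter (fun y => ∀ i ∈ T, y i = 0) ∧ T ∈ Fj.powerset := by
    intro y T
    rw [mem_powerset, mem_powerset, mem_filter]
    constructor
    · rintro ⟨hyA, hTZ⟩
      refine ⟨⟨hyA, fun i hi => ((mem_filter.mp (hTZ hi)).2).2⟩, fun i hi => ?_⟩
      exact mem_filter.mpr ⟨mem_univ _, (mem_filter.mp (hTZ hi)).2.1⟩
    · rintro ⟨⟨hyA, hzero⟩, hTF⟩
      refine ⟨hyA, fun i hi => ?_⟩
      exact mem_filter.mpr ⟨mem_univ _, (mem_filter.mp (hTF hi)).2, hzero i hi⟩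
  rw [Finset.sum_comm' hcomm]
  have h3 : ∀ T ∈ Fj.powerset,
      (∑ _y ∈ A.filter (fun y => ∀ i ∈ T, y i = 0), ((-1:ℤ)^T.card * 2^(j - T.card)))
      = (-1:ℤ)^T.card * 2^(j - T.card) * ((finAntidiagonal (n - T.card) k).card : ℤ) := by
    intro T hT
    rw [Finset.sum_const, nsmul_eq_mul]
    have hset : A.filter (fun y => ∀ i ∈ T, y i = 0) = piAntidiag Tᶜ k := by
      ext y
      rw [mem_filter, hA, mem_finAntidiagonal, mem_piAntidiag]
      constructor
      · rintro ⟨hsum, hzero⟩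
        refine ⟨?_, fun i hi => mem_compl.mpr fun hiT => hi (hzero i hiT)⟩
        rw [← hsum]
        exact Finset.sum_subset (subset_univ _) (fun i _ hi =>
          hzero i (by simpa using hi))
      · rintro ⟨hsum, hsupp⟩
        have hzero : ∀ i ∈ T, y i = 0 := fun i hi => by
          by_contra h
          exact (mem_compl.mp (hsupp i h)) hi
        refine ⟨?_, hzero⟩
        rw [← hsum]
        exact (Finset.sum_subset (subset_univ _) (fun i _ hi =>
          hzero i (by simpa using hi))).symm
    rw [hset, card_piAntidiag', card_compl, Fintype.card_fin]
    ring
  rw [Finset.sum_congr rfl h3, Finset.sum_powerset, hFjcard]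
  refine Finset.sum_congr rfl fun i hi => ?_
  rw [mem_range, Nat.lt_succ_iff] at hi
  have hconst : ∀ T ∈ powersetCard i Fj,
      ((-1:ℤ)^T.card * 2^(j - T.card) * ((finAntidiagonal (n - T.card) k).card : ℤ))
      = (-1:ℤ)^i * 2^(j-i) * ((finAntidiagonal (n - i) k).card : ℤ) := by
    intro T hT
    rw [(mem_powersetCard.mp hT).2]
  rw [Finset.sum_congr rfl hconst, Finset.sum_const, card_powersetCard, hFjcard, nsmul_eq_mul]
  have hB : ((finAntidiagonal (n - i) k).card : ℤ)
      = if i < n then ((n - i - 1 + k).choose (n - i - 1) : ℤ)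
        else if k = 0 then 1 else 0 := by
    split_ifs with hin hk0
    · rw [show n - i = (n - i - 1) + 1 from by omega, card_finAntidiagonal_succ]
      norm_cast
      exact Nat.choose_symm_add.symm
    · rw [show n - i = 0 from by omega, card_finAntidiagonal_zero, if_pos hk0]
      norm_num
    · rw [show n - i = 0 from by omega, card_finAntidiagonal_zero, if_neg hk0]
      norm_num
  rw [hB]
  ring
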